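/- Let 0 ≤ s < t, A : [0,T] → ℝ continuous with m_{s,t} > 0, a > 0, and w = (w₁, w₂) ∈ ℝ². Then the quadratic form of the inverse covariance matrix satisfies a ⟨Σ_{s,t}(a)^{-1} w, w⟩ = (1/((t−s)² m_{s,t})) ∫_s^t ((A_r − A_s) w₁ + w₂)² dr. In particular ⟨Σ_{s,t}(a)^{-1} w, w⟩ ≥ 0. -/

import Mathlib

open MeasureTheory intervalIntegral Matrix

/-- Quadratic form identity for the inverse covariance matrix, and its nonnegativity. -/
theorem stmt9 (T a : ℝ) (ha : 0 < a) (A : ℝ → ℝ) (hA : ContinuousOn A (Set.Icc 0 T))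
    (s t : ℝ) (hs : 0 ≤ s) (hst : s < t) (htT : t ≤ T)
    (hm : 0 < (t - s)⁻¹ * ∫ r in s..t, (A r - (t - s)⁻¹ * ∫ u in s..t, A u) ^ 2)
    (w : Fin 2 → ℝ) :
    a * ((a • !![t - s, -(∫ r in s..t, (A r - A s));
                 -(∫ r in s..t, (A r - A s)), ∫ r in s..t, (A r - A s) ^ 2])⁻¹.mulVec w ⬝ᵥ w)
      = (1 / ((t - s) ^ 2
            * ((t - s)⁻¹ * ∫ r in s..t, (A r - (t - s)⁻¹ * ∫ u in s..t, A u) ^ 2)))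
          * ∫ r in s..t, ((A r - A s) * w 0 + w 1) ^ 2
    ∧ 0 ≤ (a • !![t - s, -(∫ r in s..t, (A r - A s));
                  -(∫ r in s..t, (A r - A s)), ∫ r in s..t, (A r - A s) ^ 2])⁻¹.mulVec w ⬝ᵥ w := by
  have hτ : 0 < t - s := sub_pos.mpr hst
  have hτ' : t - s ≠ 0 := ne_of_gt hτ
  set τ := t - s with hτdef
  -- continuity on [s,t]
  have hsub : Set.uIcc s t ⊆ Set.Icc 0 T := by
    rw [Set.uIcc_of_le hst.le]
    exact Set.Icc_subset_Icc hs htT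
  have hc : ContinuousOn A (Set.uIcc s t) := hA.mono hsub
  have hc1 : ContinuousOn (fun r => A r - A s) (Set.uIcc s t) := hc.sub continuousOn_const
  set I1 := ∫ r in s..t, (A r - A s) with hI1
  set I2 := ∫ r in s..t, (A r - A s) ^ 2 with hI2
  set Ab := τ⁻¹ * ∫ u in s..t, A u with hAb
  set m := τ⁻¹ * ∫ r in s..t, (A r - Ab) ^ 2 with hmdef
  have hi1 : IntervalIntegrable (fun r => A r - A s) volume s t := hc1.intervalIntegrable
  have hi2 : IntervalIntegrable (fun r => (A r - A s) ^ 2) volume s t :=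
    (hc1.pow 2).intervalIntegrable
  -- Ab = A s + τ⁻¹ * I1
  have hAb' : Ab = A s + τ⁻¹ * I1 := by
    have : I1 = (∫ u in s..t, A u) - τ * A s := by
      rw [hI1, intervalIntegral.integral_sub hc.intervalIntegrable intervalIntegrable_const,
        intervalIntegral.integral_const, smul_eq_mul]
    rw [hAb, this]
    field_simp
    ring
  -- key1 : ∫ (A r - Ab)^2 = I2 - τ⁻¹ * I1^2
  have key1 : (∫ r in s..t, (A r - Ab) ^ 2) = I2 - τ⁻¹ * I1 ^ 2 := by
    have e : (∫ r in s..t, (A r - Ab) ^ 2)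
        = ∫ r in s..t, ((A r - A s) ^ 2 - (2 * (τ⁻¹ * I1)) * (A r - A s)
            + (τ⁻¹ * I1) ^ 2) := by
      apply intervalIntegral.integral_congr
      intro r _
      rw [hAb']
      ring
    rw [e, intervalIntegral.integral_add ((hi2.sub (hi1.const_mul _)))
        intervalIntegrable_const,
      intervalIntegral.integral_sub hi2 (hi1.const_mul _),
      intervalIntegral.integral_const_mul, intervalIntegral.integral_const, smul_eq_mul,
      ← hI1, ← hI2]
    field_simp
    ring
  -- key2
  have key2 : (∫ r in s..t, ((A r - A s) * w 0 + w 1) ^ 2)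
      = I2 * w 0 ^ 2 + 2 * I1 * w 0 * w 1 + τ * w 1 ^ 2 := by
    have e : (∫ r in s..t, ((A r - A s) * w 0 + w 1) ^ 2)
        = ∫ r in s..t, (w 0 ^ 2 * (A r - A s) ^ 2 + (2 * w 0 * w 1) * (A r - A s)
            + w 1 ^ 2) := by
      apply intervalIntegral.integral_congr
      intro r _
      ring
    rw [e, intervalIntegral.integral_add ((hi2.const_mul _).add (hi1.const_mul _))
        intervalIntegrable_const,
      intervalIntegral.integral_add (hi2.const_mul _) (hi1.const_mul _),
      intervalIntegral.integral_const_mul, intervalIntegral.integral_const_mul,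
      intervalIntegral.integral_const, smul_eq_mul, ← hI1, ← hI2]
    ring
  -- relation between m and τ I2 - I1²
  have hmτ : τ ^ 2 * m = τ * I2 - I1 ^ 2 := by
    rw [hmdef, key1]
    field_simp
  have hD : 0 < τ * I2 - I1 ^ 2 := by
    rw [← hmτ]
    positivity
  have hD' : τ * I2 - I1 ^ 2 ≠ 0 := ne_of_gt hD
  -- matrix computation
  set M : Matrix (Fin 2) (Fin 2) ℝ := a • !![τ, -I1; -I1, I2] with hM
  have hdet : M.det = a ^ 2 * (τ * I2 - I1 ^ 2) := by
    rw [hM, Matrix.det_smul, Matrix.det_fin_two_of]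
    simp only [Fintype.card_fin, smul_eq_mul]
    ring
  have hadj : M.adjugate = a • !![I2, I1; I1, τ] := by
    rw [hM, Matrix.adjugate_smul, Matrix.adjugate_fin_two_of]
    norm_num
  have hQ : M⁻¹.mulVec w ⬝ᵥ w
      = (a ^ 2 * (τ * I2 - I1 ^ 2))⁻¹ * a
          * (I2 * w 0 ^ 2 + 2 * I1 * w 0 * w 1 + τ * w 1 ^ 2) := by
    rw [Matrix.inv_def, hdet, hadj, Ring.inverse_eq_inv]
    simp [Matrix.mulVec, dotProduct, Fin.sum_univ_two, Matrix.smul_apply]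
    ring
  have ha' : a ≠ 0 := ne_of_gt ha
  have hmain : a * (M⁻¹.mulVec w ⬝ᵥ w)
      = (1 / (τ ^ 2 * m)) * ∫ r in s..t, ((A r - A s) * w 0 + w 1) ^ 2 := by
    rw [hQ, key2, hmτ]
    field_simp
  refine ⟨hmain, ?_⟩
  have hJ : 0 ≤ ∫ r in s..t, ((A r - A s) * w 0 + w 1) ^ 2 :=
    intervalIntegral.integral_nonneg hst.le (fun r _ => sq_nonneg _)
  have h2 : 0 ≤ a * (M⁻¹.mulVec w ⬝ᵥ w) := by
    rw [hmain]
    have : 0 < τ ^ 2 * m := by positivity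
    positivity
  nlinarith [h2]
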